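/- Let p = 1 and μ > 0 (with W ≠ ∅). Then H = ⟨m_0, m_1, n⟩ has exactly two pseudo-Frobenius numbers α_1 and β_1 (so H is not symmetric), and the defining ideal I(H) = ⟨x_0^ν − x_1^{q'+1}x_2^{v−w}, x_1^{q+1} − x_0^λ x_2^w, x_2^v − x_0^μ x_1^{q−q'}⟩ is minimally generated by RF(β_1)-relations: with RF(β_1) having rows δ_1 = (−1, u−1, v−w−1), δ_2 = (λ−1, −1, v−1), δ_3 = (ν−1, z−1, −1), the three differences δ_2 − δ_1, δ_3 − δ_1, δ_3 − δ_2 yield (up to sign) the binomials x_1^u − x_0^λ x_2^w, x_0^ν − x_1^{u−z}x_2^{v−w}, x_2^v − x_0^μ x_1^z. -/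

import Mathlib

open MvPolynomial

/-- Membership in `H = ⟨m0, m1, n⟩` (viewed in `ℤ`). -/
def inH3 (m0 m1 n x : ℤ) : Prop := ∃ a b c : ℕ, x = a * m0 + b * m1 + c * n

/-- Membership in `H' = ⟨m0, m1⟩`. -/
def inSp3 (m0 m1 x : ℤ) : Prop := ∃ a b : ℕ, x = a * m0 + b * m1

/-- `f` is a pseudo-Frobenius number of `H = ⟨m0, m1, n⟩`. -/
def isPF3 (m0 m1 n f : ℤ) : Prop :=
  ¬ inH3 m0 m1 n f ∧ ∀ h : ℤ, inH3 m0 m1 n h → h ≠ 0 → inH3 m0 m1 n (f + h)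

/-- The binomial `x^{δ⁺} − x^{δ⁻}` attached to the difference `δ = A j − A i`
of two rows of a matrix `A`. -/
noncomputable def rfBinom3 (k : Type*) [Field k] (A : Fin 3 → Fin 3 → ℤ)
    (i j : Fin 3) : MvPolynomial (Fin 3) k :=
  (∏ l, X l ^ (A j l - A i l).toNat) - ∏ l, X l ^ (A i l - A j l).toNat

section SG
variable {m0 m1 n : ℤ} {u v z w lam mu nu : ℕ}

lemma inH3_add {x y : ℤ} (hx : inH3 m0 m1 n x) (hy : inH3 m0 m1 n y) :
    inH3 m0 m1 n (x + y) := by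
  obtain ⟨a, b, c, rfl⟩ := hx
  obtain ⟨a', b', c', rfl⟩ := hy
  exact ⟨a + a', b + b', c + c', by push_cast; ring⟩

lemma sg_L0 (hm0 : 0 < m0)
    (hu' : ∀ t : ℕ, t < u → ¬ inH3 m0 m1 n ((t : ℤ) * m1 - m0))
    (hv' : ∀ s : ℕ, 1 ≤ s → s < v → ¬ inSp3 m0 m1 ((s : ℤ) * n))
    (hgu : (u : ℤ) * m1 = lam * m0 + w * n)
    (hvn : (v : ℤ) * n = mu * m0 + z * m1)
    (β γ : ℕ) (K : ℤ) (hβ1 : 1 ≤ β) (hβu : β < u) (hγ1 : 1 ≤ γ) (hγv : γ < v)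
    (hdis : β + z < u ∨ γ + w < v)
    (hE : (β : ℤ) * m1 + γ * n = K * m0) : False := by
  rcases hdis with hcase | hcase
  · -- use z + β and v − γ
    by_cases hK : K ≤ (mu : ℤ)
    · refine hv' (v - γ) (by omega) (by omega) ⟨(mu - K).toNat, z + β, ?_⟩
      have h1 : ((mu - K).toNat : ℤ) = mu - K := Int.toNat_of_nonneg (by linarith)
      have h2 : ((v - γ : ℕ) : ℤ) = v - γ := by push_cast [Nat.cast_sub hγv.le]; ring
      rw [h1, h2]; push_cast; linarith
    · refine hu' (z + β) (by omega) ⟨(K - mu - 1).toNat, 0, v - γ, ?_⟩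
      have h1 : ((K - mu - 1).toNat : ℤ) = K - mu - 1 := Int.toNat_of_nonneg (by linarith)
      have h2 : ((v - γ : ℕ) : ℤ) = v - γ := by push_cast [Nat.cast_sub hγv.le]; ring
      rw [h1, h2]; push_cast; linarith
  · -- use u − β and w + γ
    by_cases hK : K < (lam : ℤ)
    · refine hu' (u - β) (by omega) ⟨(lam - 1 - K).toNat, 0, w + γ, ?_⟩
      have h1 : ((lam - 1 - K).toNat : ℤ) = lam - 1 - K := Int.toNat_of_nonneg (by linarith)
      have h2 : ((u - β : ℕ) : ℤ) = u - β := by push_cast [Nat.cast_sub hβu.le]; ring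
      rw [h1, h2]; push_cast; linarith
    · refine hv' (w + γ) (by omega) (by omega) ⟨(K - lam).toNat, u - β, ?_⟩
      have h1 : ((K - lam).toNat : ℤ) = K - lam := Int.toNat_of_nonneg (by linarith)
      have h2 : ((u - β : ℕ) : ℤ) = u - β := by push_cast [Nat.cast_sub hβu.le]; ring
      rw [h1, h2]; push_cast; linarith

lemma sg_apery (hm0 : 0 < m0) (hm1 : 0 < m1) (hn : 0 < n)
    (hu' : ∀ t : ℕ, t < u → ¬ inH3 m0 m1 n ((t : ℤ) * m1 - m0))
    (hv' : ∀ s : ℕ, 1 ≤ s → s < v → ¬ inSp3 m0 m1 ((s : ℤ) * n))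
    (hgu : (u : ℤ) * m1 = lam * m0 + w * n)
    (hvn : (v : ℤ) * n = mu * m0 + z * m1)
    (b c : ℕ) (hb : b < u) (hc : c < v) (hbc : b + z < u ∨ c + w < v) :
    ¬ inH3 m0 m1 n ((b : ℤ) * m1 + c * n - m0) := by
  rintro ⟨a', b', c', hE⟩
  rcases lt_or_ge b' b with hbb | hbb <;> rcases lt_or_ge c' c with hcc | hcc
  · -- b' < b, c' < c : use L0
    refine sg_L0 hm0 hu' hv' hgu hvn (b - b') (c - c') ((a' : ℤ) + 1)
      (by omega) (by omega) (by omega) (by omega) (by omega) ?_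
    have h1 : ((b - b' : ℕ) : ℤ) = b - b' := by push_cast [Nat.cast_sub hbb.le]; ring
    have h2 : ((c - c' : ℕ) : ℤ) = c - c' := by push_cast [Nat.cast_sub hcc.le]; ring
    rw [h1, h2]; linarith
  · -- b' < b, c ≤ c'
    refine hu' (b - b') (by omega) ⟨a', 0, c' - c, ?_⟩
    have h1 : ((b - b' : ℕ) : ℤ) = b - b' := by push_cast [Nat.cast_sub hbb.le]; ring
    have h2 : ((c' - c : ℕ) : ℤ) = c' - c := by push_cast [Nat.cast_sub hcc]; ring
    rw [h1, h2]; push_cast; linarith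
  · -- b ≤ b', c' < c
    refine hv' (c - c') (by omega) (by omega) ⟨a' + 1, b' - b, ?_⟩
    have h1 : ((c - c' : ℕ) : ℤ) = c - c' := by push_cast [Nat.cast_sub hcc.le]; ring
    have h2 : ((b' - b : ℕ) : ℤ) = b' - b := by push_cast [Nat.cast_sub hbb]; ring
    rw [h1, h2]; push_cast; linarith
  · -- b ≤ b', c ≤ c' : impossible
    have e1 : (b : ℤ) * m1 ≤ b' * m1 := by
      have : (b : ℤ) ≤ b' := by exact_mod_cast hbb
      exact mul_le_mul_of_nonneg_right this hm1.le
    have e2 : (c : ℤ) * n ≤ c' * n := by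
      have : (c : ℤ) ≤ c' := by exact_mod_cast hcc
      exact mul_le_mul_of_nonneg_right this hn.le
    have e3 : (0 : ℤ) ≤ a' * m0 := by positivity
    linarith

lemma sg_inj (hm0 : 0 < m0) (hm1 : 0 < m1) (hn : 0 < n)
    (hu' : ∀ t : ℕ, t < u → ¬ inH3 m0 m1 n ((t : ℤ) * m1 - m0))
    (hv' : ∀ s : ℕ, 1 ≤ s → s < v → ¬ inSp3 m0 m1 ((s : ℤ) * n))
    (hgu : (u : ℤ) * m1 = lam * m0 + w * n)
    (hvn : (v : ℤ) * n = mu * m0 + z * m1)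
    (a b c a' b' c' : ℕ) (hb : b < u) (hc : c < v) (hbc : b + z < u ∨ c + w < v)
    (hb' : b' < u) (hc' : c' < v) (hbc' : b' + z < u ∨ c' + w < v)
    (hE : (a : ℤ) * m0 + b * m1 + c * n = a' * m0 + b' * m1 + c' * n) :
    a = a' ∧ b = b' ∧ c = c' := by
  rcases lt_trichotomy a a' with haa | haa | haa
  · exfalso
    refine sg_apery hm0 hm1 hn hu' hv' hgu hvn b c hb hc hbc ⟨a' - a - 1, b', c', ?_⟩
    have h1 : ((a' - a - 1 : ℕ) : ℤ) = a' - a - 1 := by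
      have : a + 1 ≤ a' := haa
      push_cast [Nat.cast_sub (by omega : 1 ≤ a' - a), Nat.cast_sub (by omega : a ≤ a')]; ring
    rw [h1]; linarith
  · -- a = a'
    subst haa
    have hE2 : (b : ℤ) * m1 + c * n = b' * m1 + c' * n := by linarith
    rcases lt_trichotomy b b' with hbb | hbb | hbb
    · exfalso
      have hcc : c' < c := by
        by_contra hcon
        push_neg at hcon
        have e1 : (b : ℤ) * m1 < b' * m1 := by
          have : (b : ℤ) < b' := by exact_mod_cast hbb
          exact mul_lt_mul_of_pos_right this hm1
        have e2 : (c : ℤ) * n ≤ c' * n := by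
          have : (c : ℤ) ≤ c' := by exact_mod_cast hcon
          exact mul_le_mul_of_nonneg_right this hn.le
        linarith
      refine hv' (c - c') (by omega) (by omega) ⟨0, b' - b, ?_⟩
      have h1 : ((c - c' : ℕ) : ℤ) = c - c' := by push_cast [Nat.cast_sub hcc.le]; ring
      have h2 : ((b' - b : ℕ) : ℤ) = b' - b := by push_cast [Nat.cast_sub hbb.le]; ring
      rw [h1, h2]; push_cast; linarith
    · subst hbb
      have : (c : ℤ) = c' := by
        have hne : (n : ℤ) ≠ 0 := hn.ne'
        exact mul_right_cancel₀ hne (by linarith : (c : ℤ) * n = (c' : ℤ) * n)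
      exact ⟨rfl, rfl, by exact_mod_cast this⟩
    · exfalso
      have hcc : c < c' := by
        by_contra hcon
        push_neg at hcon
        have e1 : (b' : ℤ) * m1 < b * m1 := by
          have : (b' : ℤ) < b := by exact_mod_cast hbb
          exact mul_lt_mul_of_pos_right this hm1
        have e2 : (c' : ℤ) * n ≤ c * n := by
          have : (c' : ℤ) ≤ c := by exact_mod_cast hcon
          exact mul_le_mul_of_nonneg_right this hn.le
        linarith
      refine hv' (c' - c) (by omega) (by omega) ⟨0, b - b', ?_⟩
      have h1 : ((c' - c : ℕ) : ℤ) = c' - c := by push_cast [Nat.cast_sub hcc.le]; ring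
      have h2 : ((b - b' : ℕ) : ℤ) = b - b' := by push_cast [Nat.cast_sub hbb.le]; ring
      rw [h1, h2]; push_cast; linarith
  · exfalso
    refine sg_apery hm0 hm1 hn hu' hv' hgu hvn b' c' hb' hc' hbc' ⟨a - a' - 1, b, c, ?_⟩
    have h1 : ((a - a' - 1 : ℕ) : ℤ) = a - a' - 1 := by
      push_cast [Nat.cast_sub (by omega : 1 ≤ a - a'), Nat.cast_sub (by omega : a' ≤ a)]; ring
    rw [h1]; linarith

end SG

section PF
variable {m0 m1 n : ℤ} {u v z w lam mu nu : ℕ}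

lemma inH3_add' {x y : ℤ} (hx : inH3 m0 m1 n x) (hy : inH3 m0 m1 n y) :
    inH3 m0 m1 n (x + y) := by
  obtain ⟨a, b, c, rfl⟩ := hx; obtain ⟨a', b', c', rfl⟩ := hy
  exact ⟨a + a', b + b', c + c', by push_cast; ring⟩

lemma isPF3_iff4 (hm0 : 0 < m0) (hm1 : 0 < m1) (hn : 0 < n) (f : ℤ) :
    isPF3 m0 m1 n f ↔ ¬ inH3 m0 m1 n f ∧ inH3 m0 m1 n (f + m0) ∧
      inH3 m0 m1 n (f + m1) ∧ inH3 m0 m1 n (f + n) := by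
  constructor
  · rintro ⟨h1, h2⟩
    exact ⟨h1, h2 m0 ⟨1, 0, 0, by ring⟩ hm0.ne',
      h2 m1 ⟨0, 1, 0, by ring⟩ hm1.ne', h2 n ⟨0, 0, 1, by ring⟩ hn.ne'⟩
  · rintro ⟨h1, h2, h3, h4⟩
    refine ⟨h1, ?_⟩
    rintro h ⟨a, b, c, rfl⟩ hne
    rcases Nat.eq_zero_or_pos a with ha | ha
    · rcases Nat.eq_zero_or_pos b with hb | hb
      · rcases Nat.eq_zero_or_pos c with hc | hc
        · exact absurd (by simp [ha, hb, hc]) hne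
        · have : f + ((a : ℤ) * m0 + b * m1 + c * n)
              = (f + n) + ((a : ℤ) * m0 + b * m1 + ((c - 1 : ℕ) : ℤ) * n) := by
            push_cast [Nat.cast_sub hc]; ring
          rw [this]
          exact inH3_add' h4 ⟨a, b, c - 1, rfl⟩
      · have : f + ((a : ℤ) * m0 + b * m1 + c * n)
            = (f + m1) + ((a : ℤ) * m0 + ((b - 1 : ℕ) : ℤ) * m1 + c * n) := by
          push_cast [Nat.cast_sub hb]; ring
        rw [this]
        exact inH3_add' h3 ⟨a, b - 1, c, rfl⟩
    · have : f + ((a : ℤ) * m0 + b * m1 + c * n)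
          = (f + m0) + (((a - 1 : ℕ) : ℤ) * m0 + (b : ℤ) * m1 + c * n) := by
        push_cast [Nat.cast_sub ha]; ring
      rw [this]
      exact inH3_add' h2 ⟨a - 1, b, c, rfl⟩

end PF

section PF2
variable {m0 m1 n : ℤ} {u v z w lam mu nu : ℕ}

lemma sg_PF (hm0 : 0 < m0) (hm1 : 0 < m1) (hn : 0 < n)
    (hu' : ∀ t : ℕ, t < u → ¬ inH3 m0 m1 n ((t : ℤ) * m1 - m0))
    (hv' : ∀ s : ℕ, 1 ≤ s → s < v → ¬ inSp3 m0 m1 ((s : ℤ) * n))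
    (hgu : (u : ℤ) * m1 = lam * m0 + w * n)
    (hvn : (v : ℤ) * n = mu * m0 + z * m1)
    (hnuZ : (nu : ℤ) * m0 = ((u - z : ℕ) : ℤ) * m1 + ((v - w : ℕ) : ℤ) * n)
    (hzu : z < u) (hwv : w < v) (hz1 : 1 ≤ z) (hw1 : 1 ≤ w)
    (hlam : 1 ≤ lam) (hmu : 1 ≤ mu) (f : ℤ) :
    isPF3 m0 m1 n f ↔
      (f = ((u - z - 1 : ℕ) : ℤ) * m1 + ((v - 1 : ℕ) : ℤ) * n - m0 ∨
       f = ((u - 1 : ℕ) : ℤ) * m1 + ((v - w - 1 : ℕ) : ℤ) * n - m0) := by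
  have hnu1 : 1 ≤ nu := by
    by_contra hcon
    push_neg at hcon
    interval_cases nu
    have e1 : (1 : ℤ) ≤ ((u - z : ℕ) : ℤ) := by exact_mod_cast (by omega : 1 ≤ u - z)
    have e2 : (1 : ℤ) ≤ ((v - w : ℕ) : ℤ) := by exact_mod_cast (by omega : 1 ≤ v - w)
    have t1 : (1 : ℤ) * m1 ≤ ((u - z : ℕ) : ℤ) * m1 := mul_le_mul_of_nonneg_right e1 hm1.le
    have t2 : (1 : ℤ) * n ≤ ((v - w : ℕ) : ℤ) * n := mul_le_mul_of_nonneg_right e2 hn.le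
    have : ((0 : ℕ) : ℤ) * m0 = 0 := by push_cast; ring
    linarith [hnuZ]
  have hnuZ' : (nu : ℤ) * m0 = ((u : ℤ) - z) * m1 + ((v : ℤ) - w) * n := by
    rw [hnuZ]; push_cast [Nat.cast_sub hzu.le, Nat.cast_sub hwv.le]; ring
  rw [isPF3_iff4 hm0 hm1 hn]
  constructor
  · rintro ⟨h1, h2, h3, h4⟩
    obtain ⟨a, b, c, hE⟩ := h2
    have ha : a = 0 := by
      by_contra hcon
      exact h1 ⟨a - 1, b, c, by push_cast [Nat.cast_sub (by omega : 1 ≤ a)]; linarith⟩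
    subst ha
    have hf : f = (b : ℤ) * m1 + c * n - m0 := by push_cast at hE; linarith
    have hb : b < u := by
      by_contra hcon
      push_neg at hcon
      refine h1 ⟨lam - 1, b - u, c + w, ?_⟩
      rw [hf]
      push_cast [Nat.cast_sub (by omega : 1 ≤ lam), Nat.cast_sub hcon]
      linear_combination hgu
    have hc : c < v := by
      by_contra hcon
      push_neg at hcon
      refine h1 ⟨mu - 1, b + z, c - v, ?_⟩
      rw [hf]
      push_cast [Nat.cast_sub (by omega : 1 ≤ mu), Nat.cast_sub hcon]
      linear_combination hvn
    have hbc : b + z < u ∨ c + w < v := by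
      by_contra hcon
      push_neg at hcon
      refine h1 ⟨nu - 1, b - (u - z), c - (v - w), ?_⟩
      rw [hf]
      push_cast [Nat.cast_sub (by omega : 1 ≤ nu), Nat.cast_sub (by omega : u - z ≤ b),
        Nat.cast_sub (by omega : v - w ≤ c), Nat.cast_sub hzu.le, Nat.cast_sub hwv.le]
      linear_combination (-1 : ℤ) * hnuZ'
    have C1 : ¬ (b + 1 < u ∧ (b + 1 + z < u ∨ c + w < v)) := by
      rintro ⟨d1, d2⟩
      refine sg_apery hm0 hm1 hn hu' hv' hgu hvn (b + 1) c d1 hc d2 ?_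
      have : f + m1 = ((b + 1 : ℕ) : ℤ) * m1 + (c : ℤ) * n - m0 := by
        rw [hf]; push_cast; ring
      rwa [this] at h3
    have C2 : ¬ (c + 1 < v ∧ (b + z < u ∨ c + 1 + w < v)) := by
      rintro ⟨d1, d2⟩
      refine sg_apery hm0 hm1 hn hu' hv' hgu hvn b (c + 1) hb d1 d2 ?_
      have : f + n = ((b : ℕ) : ℤ) * m1 + ((c + 1 : ℕ) : ℤ) * n - m0 := by
        rw [hf]; push_cast; ring
      rwa [this] at h4
    have : (b = u - z - 1 ∧ c = v - 1) ∨ (b = u - 1 ∧ c = v - w - 1) := by omega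
    rcases this with ⟨rfl, rfl⟩ | ⟨rfl, rfl⟩
    · exact Or.inl hf
    · exact Or.inr hf
  · rintro (rfl | rfl)
    · refine ⟨sg_apery hm0 hm1 hn hu' hv' hgu hvn (u - z - 1) (v - 1)
        (by omega) (by omega) (by omega), ⟨0, u - z - 1, v - 1, by push_cast; ring⟩,
        ⟨nu - 1, 0, w - 1, ?_⟩, ⟨mu - 1, u - 1, 0, ?_⟩⟩
      · push_cast [Nat.cast_sub (by omega : 1 ≤ nu), Nat.cast_sub (by omega : 1 ≤ w),
          Nat.cast_sub (by omega : 1 ≤ u - z), Nat.cast_sub (by omega : 1 ≤ v),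
          Nat.cast_sub hzu.le, Nat.cast_sub hwv.le]
        linear_combination (-1 : ℤ) * hnuZ'
      · push_cast [Nat.cast_sub (by omega : 1 ≤ mu), Nat.cast_sub (by omega : 1 ≤ u),
          Nat.cast_sub (by omega : 1 ≤ u - z), Nat.cast_sub (by omega : 1 ≤ v),
          Nat.cast_sub hzu.le]
        linear_combination hvn
    · refine ⟨sg_apery hm0 hm1 hn hu' hv' hgu hvn (u - 1) (v - w - 1)
        (by omega) (by omega) (by omega), ⟨0, u - 1, v - w - 1, by push_cast; ring⟩,
        ⟨lam - 1, 0, v - 1, ?_⟩, ⟨nu - 1, z - 1, 0, ?_⟩⟩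
      · push_cast [Nat.cast_sub (by omega : 1 ≤ lam), Nat.cast_sub (by omega : 1 ≤ u),
          Nat.cast_sub (by omega : 1 ≤ v - w), Nat.cast_sub (by omega : 1 ≤ v),
          Nat.cast_sub hwv.le]
        linear_combination hgu
      · push_cast [Nat.cast_sub (by omega : 1 ≤ nu), Nat.cast_sub (by omega : 1 ≤ z),
          Nat.cast_sub (by omega : 1 ≤ u), Nat.cast_sub (by omega : 1 ≤ v - w),
          Nat.cast_sub hzu.le, Nat.cast_sub hwv.le]
        linear_combination (-1 : ℤ) * hnuZ'

end PF2



noncomputable def fe (a b c : ℕ) : Fin 3 →₀ ℕ :=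
  Finsupp.single 0 a + Finsupp.single 1 b + Finsupp.single 2 c

@[simp] lemma fe_app0 (a b c : ℕ) : fe a b c 0 = a := by
  simp [fe, Finsupp.single_apply]
@[simp] lemma fe_app1 (a b c : ℕ) : fe a b c 1 = b := by
  simp [fe, Finsupp.single_apply]
@[simp] lemma fe_app2 (a b c : ℕ) : fe a b c 2 = c := by
  simp [fe, Finsupp.single_apply]

lemma fe_surj (e : Fin 3 →₀ ℕ) : fe (e 0) (e 1) (e 2) = e := by
  ext i
  fin_cases i <;> simp

lemma fe_add (a b c a' b' c' : ℕ) :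
    fe a b c + fe a' b' c' = fe (a + a') (b + b') (c + c') := by
  ext i
  fin_cases i <;> simp

lemma fe_le {a b c a' b' c' : ℕ} :
    fe a b c ≤ fe a' b' c' ↔ a ≤ a' ∧ b ≤ b' ∧ c ≤ c' := by
  constructor
  · intro h
    exact ⟨by simpa using h 0, by simpa using h 1, by simpa using h 2⟩
  · rintro ⟨h1, h2, h3⟩ i
    fin_cases i <;> simpa

lemma fe_eq_iff {a b c a' b' c' : ℕ} :
    fe a b c = fe a' b' c' ↔ a = a' ∧ b = b' ∧ c = c' := by
  constructor
  · intro h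
    refine ⟨?_, ?_, ?_⟩
    · have := DFunLike.congr_fun h 0; simpa using this
    · have := DFunLike.congr_fun h 1; simpa using this
    · have := DFunLike.congr_fun h 2; simpa using this
  · rintro ⟨rfl, rfl, rfl⟩; rfl

section Mono
variable {k : Type*} [Field k]

lemma X_mono (a b c : ℕ) :
    (X 0 ^ a * X 1 ^ b * X 2 ^ c : MvPolynomial (Fin 3) k) = monomial (fe a b c) 1 := by
  simp [X_pow_eq_monomial, monomial_mul, fe]

/-- weighted degree -/
def degf (m0 m1 n : ℕ) (e : Fin 3 →₀ ℕ) : ℕ := m0 * e 0 + m1 * e 1 + n * e 2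

lemma aeval_mono (m0 m1 n : ℕ) (e : Fin 3 →₀ ℕ) (r : k) :
    (aeval fun i : Fin 3 => (Polynomial.X : Polynomial k) ^ (![m0, m1, n] i)) (monomial e r)
      = Polynomial.C r * Polynomial.X ^ (degf m0 m1 n e) := by
  rw [aeval_monomial, Finsupp.prod_fintype _ _ (fun i => pow_zero _), Fin.prod_univ_three]
  have h0 : ![m0, m1, n] 0 = m0 := rfl
  have h1 : ![m0, m1, n] 1 = m1 := rfl
  have h2 : ![m0, m1, n] 2 = n := rfl
  rw [h0, h1, h2, ← pow_mul, ← pow_mul, ← pow_mul, ← pow_add, ← pow_add]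
  rw [Polynomial.algebraMap_eq]
  rfl

end Mono

section Reduce
variable {k : Type*} [Field k]

set_option maxHeartbeats 2000000 in
lemma sg_reduce (m0 m1 n u v z w lam mu nu : ℕ)
    (hm0 : 0 < m0) (hlam : 0 < lam) (hmu : 0 < mu) (hnu : 0 < nu)
    (R1 : u * m1 = lam * m0 + w * n) (R2 : nu * m0 = (u - z) * m1 + (v - w) * n)
    (R3 : v * n = mu * m0 + z * m1) (hzu : z < u) (hwv : w < v) :
    ∀ e : Fin 3 →₀ ℕ, ∃ e' : Fin 3 →₀ ℕ,
      (e' 1 < u ∧ e' 2 < v ∧ (e' 1 + z < u ∨ e' 2 + w < v)) ∧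
      degf m0 m1 n e' = degf m0 m1 n e ∧
      (monomial e (1 : k) - monomial e' 1) ∈ Ideal.span
        {(monomial (fe 0 u 0) 1 - monomial (fe lam 0 w) 1 : MvPolynomial (Fin 3) k),
         monomial (fe nu 0 0) 1 - monomial (fe 0 (u - z) (v - w)) 1,
         monomial (fe 0 0 v) 1 - monomial (fe mu z 0) 1} := by
  have R1' : (u : ℤ) * m1 = lam * m0 + w * n := by exact_mod_cast R1
  have R2' : (nu : ℤ) * m0 = ((u : ℤ) - z) * m1 + ((v : ℤ) - w) * n := by
    zify [hzu.le, hwv.le] at R2; linarith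
  have R3' : (v : ℤ) * n = mu * m0 + z * m1 := by exact_mod_cast R3
  have hlm : (1 : ℤ) ≤ (lam : ℤ) * m0 := by
    have := Nat.mul_le_mul hlam hm0; exact_mod_cast this
  have hmm : (1 : ℤ) ≤ (mu : ℤ) * m0 := by
    have := Nat.mul_le_mul hmu hm0; exact_mod_cast this
  have hnm : (1 : ℤ) ≤ (nu : ℤ) * m0 := by
    have := Nat.mul_le_mul hnu hm0; exact_mod_cast this
  suffices H : ∀ (N : ℕ) (e : Fin 3 →₀ ℕ), m1 * e 1 + n * e 2 < N →
      ∃ e' : Fin 3 →₀ ℕ,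
      (e' 1 < u ∧ e' 2 < v ∧ (e' 1 + z < u ∨ e' 2 + w < v)) ∧
      degf m0 m1 n e' = degf m0 m1 n e ∧
      (monomial e (1 : k) - monomial e' 1) ∈ Ideal.span
        {(monomial (fe 0 u 0) 1 - monomial (fe lam 0 w) 1 : MvPolynomial (Fin 3) k),
         monomial (fe nu 0 0) 1 - monomial (fe 0 (u - z) (v - w)) 1,
         monomial (fe 0 0 v) 1 - monomial (fe mu z 0) 1} by
    intro e; exact H (m1 * e 1 + n * e 2 + 1) e (by omega)
  intro N
  induction N with
  | zero => intro e he; omega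
  | succ N ih =>
    intro e he
    by_cases hnrm : e 1 < u ∧ e 2 < v ∧ (e 1 + z < u ∨ e 2 + w < v)
    · exact ⟨e, hnrm, rfl, by simp⟩
    · have hcases : u ≤ e 1 ∨ v ≤ e 2 ∨ (u - z ≤ e 1 ∧ v - w ≤ e 2) := by omega
      rcases hcases with hcase | hcase | hcase
      · -- rewrite with G1 : x1^u → x0^lam x2^w
        set e'' : Fin 3 →₀ ℕ := fe (e 0 + lam) (e 1 - u) (e 2 + w) with he''
        have hre : fe (e 0) (e 1 - u) (e 2) + fe 0 u 0 = e := by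
          rw [fe_add, (by omega : e 1 - u + u = e 1), add_zero, add_zero, fe_surj]
        have hre2 : fe (e 0) (e 1 - u) (e 2) + fe lam 0 w = e'' := by
          rw [fe_add, he'']; congr 1 <;> omega
        have hmem : (monomial e (1 : k) - monomial e'' 1) ∈ Ideal.span
            {(monomial (fe 0 u 0) 1 - monomial (fe lam 0 w) 1 : MvPolynomial (Fin 3) k),
             monomial (fe nu 0 0) 1 - monomial (fe 0 (u - z) (v - w)) 1,
             monomial (fe 0 0 v) 1 - monomial (fe mu z 0) 1} := by
          have key : monomial e (1 : k) - monomial e'' 1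
              = monomial (fe (e 0) (e 1 - u) (e 2)) 1 *
                (monomial (fe 0 u 0) 1 - monomial (fe lam 0 w) 1) := by
            rw [mul_sub, monomial_mul, monomial_mul, one_mul, hre, hre2]
          rw [key]
          exact Ideal.mul_mem_left _ _ (Ideal.subset_span (by simp))
        have hmeas : m1 * e'' 1 + n * e'' 2 < N := by
          have h1 : e'' 1 = e 1 - u := by simp [he'']
          have h2 : e'' 2 = e 2 + w := by simp [he'']
          rw [h1, h2]
          have key : (m1 : ℤ) * ((e 1 - u : ℕ) : ℤ) + n * ((e 2 + w : ℕ) : ℤ)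
              = m1 * e 1 + n * e 2 - lam * m0 := by
            push_cast [Nat.cast_sub hcase]
            linarith
          have hNe : (m1 : ℤ) * e 1 + n * e 2 < (N : ℤ) + 1 := by exact_mod_cast he
          have : (m1 : ℤ) * ((e 1 - u : ℕ) : ℤ) + n * ((e 2 + w : ℕ) : ℤ) < N := by
            rw [key]; linarith
          exact_mod_cast this
        obtain ⟨e', hn', hd', hm'⟩ := ih e'' hmeas
        refine ⟨e', hn', ?_, ?_⟩
        · rw [hd']
          have : (degf m0 m1 n e'' : ℤ) = degf m0 m1 n e := by
            simp only [degf, he'', fe_app0, fe_app1, fe_app2]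
            push_cast [Nat.cast_sub hcase]
            linarith
          exact_mod_cast this
        · have : monomial e (1 : k) - monomial e' 1
              = (monomial e 1 - monomial e'' 1) + (monomial e'' 1 - monomial e' 1) := by ring
          rw [this]
          exact Ideal.add_mem _ hmem hm'
      · -- rewrite with G3 : x2^v → x0^mu x1^z
        set e'' : Fin 3 →₀ ℕ := fe (e 0 + mu) (e 1 + z) (e 2 - v) with he''
        have hre : fe (e 0) (e 1) (e 2 - v) + fe 0 0 v = e := by
          rw [fe_add, (by omega : e 2 - v + v = e 2), add_zero, add_zero, fe_surj]
        have hre2 : fe (e 0) (e 1) (e 2 - v) + fe mu z 0 = e'' := by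
          rw [fe_add, he'']; congr 1 <;> omega
        have hmem : (monomial e (1 : k) - monomial e'' 1) ∈ Ideal.span
            {(monomial (fe 0 u 0) 1 - monomial (fe lam 0 w) 1 : MvPolynomial (Fin 3) k),
             monomial (fe nu 0 0) 1 - monomial (fe 0 (u - z) (v - w)) 1,
             monomial (fe 0 0 v) 1 - monomial (fe mu z 0) 1} := by
          have key : monomial e (1 : k) - monomial e'' 1
              = monomial (fe (e 0) (e 1) (e 2 - v)) 1 *
                (monomial (fe 0 0 v) 1 - monomial (fe mu z 0) 1) := by
            rw [mul_sub, monomial_mul, monomial_mul, one_mul, hre, hre2]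
          rw [key]
          exact Ideal.mul_mem_left _ _ (Ideal.subset_span (by simp))
        have hmeas : m1 * e'' 1 + n * e'' 2 < N := by
          have h1 : e'' 1 = e 1 + z := by simp [he'']
          have h2 : e'' 2 = e 2 - v := by simp [he'']
          rw [h1, h2]
          have key : (m1 : ℤ) * ((e 1 + z : ℕ) : ℤ) + n * ((e 2 - v : ℕ) : ℤ)
              = m1 * e 1 + n * e 2 - mu * m0 := by
            push_cast [Nat.cast_sub hcase]
            linarith
          have hNe : (m1 : ℤ) * e 1 + n * e 2 < (N : ℤ) + 1 := by exact_mod_cast he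
          have : (m1 : ℤ) * ((e 1 + z : ℕ) : ℤ) + n * ((e 2 - v : ℕ) : ℤ) < N := by
            rw [key]; linarith
          exact_mod_cast this
        obtain ⟨e', hn', hd', hm'⟩ := ih e'' hmeas
        refine ⟨e', hn', ?_, ?_⟩
        · rw [hd']
          have : (degf m0 m1 n e'' : ℤ) = degf m0 m1 n e := by
            simp only [degf, he'', fe_app0, fe_app1, fe_app2]
            push_cast [Nat.cast_sub hcase]
            linarith
          exact_mod_cast this
        · have : monomial e (1 : k) - monomial e' 1
              = (monomial e 1 - monomial e'' 1) + (monomial e'' 1 - monomial e' 1) := by ring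
          rw [this]
          exact Ideal.add_mem _ hmem hm'
      · -- rewrite with G2 : x1^{u-z} x2^{v-w} → x0^nu
        obtain ⟨hc1, hc2⟩ := hcase
        set e'' : Fin 3 →₀ ℕ := fe (e 0 + nu) (e 1 - (u - z)) (e 2 - (v - w)) with he''
        have hre : fe (e 0) (e 1 - (u - z)) (e 2 - (v - w)) + fe 0 (u - z) (v - w) = e := by
          rw [fe_add, (by omega : e 1 - (u - z) + (u - z) = e 1),
            (by omega : e 2 - (v - w) + (v - w) = e 2), add_zero, fe_surj]
        have hre2 : fe (e 0) (e 1 - (u - z)) (e 2 - (v - w)) + fe nu 0 0 = e'' := by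
          rw [fe_add, he'']; congr 1 <;> omega
        have hmem : (monomial e (1 : k) - monomial e'' 1) ∈ Ideal.span
            {(monomial (fe 0 u 0) 1 - monomial (fe lam 0 w) 1 : MvPolynomial (Fin 3) k),
             monomial (fe nu 0 0) 1 - monomial (fe 0 (u - z) (v - w)) 1,
             monomial (fe 0 0 v) 1 - monomial (fe mu z 0) 1} := by
          have key : monomial e (1 : k) - monomial e'' 1
              = (-(monomial (fe (e 0) (e 1 - (u - z)) (e 2 - (v - w))) 1)) *
                (monomial (fe nu 0 0) 1 - monomial (fe 0 (u - z) (v - w)) 1) := by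
            rw [neg_mul, mul_sub, monomial_mul, monomial_mul, one_mul, hre, hre2]
            ring
          rw [key]
          exact Ideal.mul_mem_left _ _ (Ideal.subset_span (by simp))
        have hmeas : m1 * e'' 1 + n * e'' 2 < N := by
          have h1 : e'' 1 = e 1 - (u - z) := by simp [he'']
          have h2 : e'' 2 = e 2 - (v - w) := by simp [he'']
          rw [h1, h2]
          have key : (m1 : ℤ) * (e 1 - (u - z) : ℕ) + (n : ℤ) * (e 2 - (v - w) : ℕ)
              = m1 * e 1 + n * e 2 - nu * m0 := by
            push_cast [Nat.cast_sub hc1, Nat.cast_sub hc2, Nat.cast_sub hzu.le,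
              Nat.cast_sub hwv.le]
            linarith
          have hle : (m1 : ℤ) * (e 1 - (u - z) : ℕ) + (n : ℤ) * (e 2 - (v - w) : ℕ)
              ≤ (m1 : ℤ) * e 1 + n * e 2 - 1 := by rw [key]; linarith
          have hNe : (m1 : ℤ) * e 1 + n * e 2 < N + 1 := by exact_mod_cast he
          have : (m1 : ℤ) * (e 1 - (u - z) : ℕ) + (n : ℤ) * (e 2 - (v - w) : ℕ) < N := by
            linarith
          exact_mod_cast this
        obtain ⟨e', hn', hd', hm'⟩ := ih e'' hmeas
        refine ⟨e', hn', ?_, ?_⟩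
        · rw [hd']
          have : (degf m0 m1 n e'' : ℤ) = degf m0 m1 n e := by
            simp only [degf, he'', fe_app0, fe_app1, fe_app2]
            push_cast [Nat.cast_sub hc1, Nat.cast_sub hc2, Nat.cast_sub hzu.le,
              Nat.cast_sub hwv.le]
            linarith
          exact_mod_cast this
        · have : monomial e (1 : k) - monomial e' 1
              = (monomial e 1 - monomial e'' 1) + (monomial e'' 1 - monomial e' 1) := by ring
          rw [this]
          exact Ideal.add_mem _ hmem hm'

end Reduce

section Ker
variable {k : Type*} [Field k]

lemma sg_injpoly (m0 m1 n u v z w : ℕ)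
    (hinj : ∀ e e' : Fin 3 →₀ ℕ,
      (e 1 < u ∧ e 2 < v ∧ (e 1 + z < u ∨ e 2 + w < v)) →
      (e' 1 < u ∧ e' 2 < v ∧ (e' 1 + z < u ∨ e' 2 + w < v)) →
      degf m0 m1 n e = degf m0 m1 n e' → e = e')
    (g : MvPolynomial (Fin 3) k)
    (hg : ∀ e ∈ g.support, e 1 < u ∧ e 2 < v ∧ (e 1 + z < u ∨ e 2 + w < v))
    (h0 : (aeval fun i : Fin 3 => (Polynomial.X : Polynomial k) ^ (![m0, m1, n] i)) g = 0) :
    g = 0 := by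
  by_contra hne
  obtain ⟨e0, he0⟩ := Finset.nonempty_iff_ne_empty.mpr
    (fun h => hne (MvPolynomial.support_eq_empty.mp h))
  have key : Polynomial.coeff
      ((aeval fun i : Fin 3 => (Polynomial.X : Polynomial k) ^ (![m0, m1, n] i)) g)
      (degf m0 m1 n e0) = coeff e0 g := by
    conv_lhs => rw [g.as_sum]
    rw [map_sum, Polynomial.finset_sum_coeff]
    rw [Finset.sum_eq_single_of_mem e0 he0]
    · rw [aeval_mono]
      simp
    · intro e he hne'
      rw [aeval_mono, Polynomial.coeff_C_mul, Polynomial.coeff_X_pow]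
      by_cases hdeg : degf m0 m1 n e0 = degf m0 m1 n e
      · exact absurd (hinj e e0 (hg e he) (hg e0 he0) hdeg.symm) hne'
      · simp [hdeg]
  rw [h0] at key
  simp only [Polynomial.coeff_zero] at key
  exact mem_support_iff.mp he0 key.symm

lemma sg_ker_sub (m0 m1 n u v z w lam mu nu : ℕ)
    (hm0 : 0 < m0) (hlam : 0 < lam) (hmu : 0 < mu) (hnu : 0 < nu)
    (R1 : u * m1 = lam * m0 + w * n) (R2 : nu * m0 = (u - z) * m1 + (v - w) * n)
    (R3 : v * n = mu * m0 + z * m1) (hzu : z < u) (hwv : w < v)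
    (hinj : ∀ e e' : Fin 3 →₀ ℕ,
      (e 1 < u ∧ e 2 < v ∧ (e 1 + z < u ∨ e 2 + w < v)) →
      (e' 1 < u ∧ e' 2 < v ∧ (e' 1 + z < u ∨ e' 2 + w < v)) →
      degf m0 m1 n e = degf m0 m1 n e' → e = e')
    (f : MvPolynomial (Fin 3) k)
    (hf : (aeval fun i : Fin 3 => (Polynomial.X : Polynomial k) ^ (![m0, m1, n] i)) f = 0) :
    f ∈ Ideal.span
        {(monomial (fe 0 u 0) 1 - monomial (fe lam 0 w) 1 : MvPolynomial (Fin 3) k),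
         monomial (fe nu 0 0) 1 - monomial (fe 0 (u - z) (v - w)) 1,
         monomial (fe 0 0 v) 1 - monomial (fe mu z 0) 1} := by
  classical
  choose nf hnf1 hnf2 hnf3 using sg_reduce (k := k) m0 m1 n u v z w lam mu nu
    hm0 hlam hmu hnu R1 R2 R3 hzu hwv
  set F : MvPolynomial (Fin 3) k :=
    ∑ e ∈ f.support, coeff e f • monomial (nf e) 1 with hF
  have hsub : f - F ∈ Ideal.span
      {(monomial (fe 0 u 0) 1 - monomial (fe lam 0 w) 1 : MvPolynomial (Fin 3) k),
       monomial (fe nu 0 0) 1 - monomial (fe 0 (u - z) (v - w)) 1,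
       monomial (fe 0 0 v) 1 - monomial (fe mu z 0) 1} := by
    have step : f - F = ∑ e ∈ f.support,
        coeff e f • (monomial e 1 - monomial (nf e) 1) := by
      conv_lhs => rw [f.as_sum]
      rw [hF, ← Finset.sum_sub_distrib]
      refine Finset.sum_congr rfl fun e _ => ?_
      rw [smul_sub, smul_monomial, smul_monomial, smul_eq_mul, mul_one]
    rw [step]
    refine Submodule.sum_mem _ fun e _ => ?_
    rw [MvPolynomial.smul_eq_C_mul]
    exact Ideal.mul_mem_left _ _ (hnf3 e)
  have hFval : (aeval fun i : Fin 3 => (Polynomial.X : Polynomial k) ^ (![m0, m1, n] i)) F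
      = 0 := by
    have h1 : (aeval fun i : Fin 3 => (Polynomial.X : Polynomial k) ^ (![m0, m1, n] i)) F
        = ∑ e ∈ f.support, Polynomial.C (coeff e f) * Polynomial.X ^ (degf m0 m1 n e) := by
      rw [hF, map_sum]
      refine Finset.sum_congr rfl fun e _ => ?_
      rw [smul_monomial, smul_eq_mul, mul_one, aeval_mono, hnf2]
    have h2 : (aeval fun i : Fin 3 => (Polynomial.X : Polynomial k) ^ (![m0, m1, n] i)) f
        = ∑ e ∈ f.support, Polynomial.C (coeff e f) * Polynomial.X ^ (degf m0 m1 n e) := by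
      conv_lhs => rw [f.as_sum]
      rw [map_sum]
      exact Finset.sum_congr rfl fun e _ => aeval_mono m0 m1 n e _
    rw [h1, ← h2, hf]
  have hFsupp : ∀ e' ∈ F.support, e' 1 < u ∧ e' 2 < v ∧ (e' 1 + z < u ∨ e' 2 + w < v) := by
    intro e' he'
    have hsup := MvPolynomial.support_sum he'
    rw [Finset.mem_biUnion] at hsup
    obtain ⟨e, _, hmem⟩ := hsup
    have h1 : (coeff e f • monomial (nf e) (1 : k)).support ⊆ {nf e} := by
      refine subset_trans MvPolynomial.support_smul ?_
      rw [MvPolynomial.support_monomial]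
      split <;> simp
    have : e' = nf e := by simpa using h1 hmem
    rw [this]
    exact hnf1 e
  have hF0 : F = 0 := sg_injpoly m0 m1 n u v z w hinj F hFsupp hFval
  rw [hF0, sub_zero] at hsub
  exact hsub

end Ker

section Min
variable {k : Type*} [Field k]

lemma sg_star (u v z w lam mu nu : ℕ)
    (hu : 0 < u) (hv : 0 < v) (hz : 0 < z) (hw : 0 < w) (hlam : 0 < lam) (hmu : 0 < mu)
    (hnu : 0 < nu) (hzu : z < u) (hwv : w < v)
    (h1 h2 h3 : MvPolynomial (Fin 3) k)
    (hrel : h1 * (monomial (fe 0 u 0) 1 - monomial (fe lam 0 w) 1)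
          + h2 * (monomial (fe nu 0 0) 1 - monomial (fe 0 (u - z) (v - w)) 1)
          + h3 * (monomial (fe 0 0 v) 1 - monomial (fe mu z 0) 1) = 0) :
    coeff 0 h1 = 0 ∧ coeff 0 h2 = 0 ∧ coeff 0 h3 = 0 := by
  have c1 := congrArg (coeff (fe 0 u 0)) hrel
  have c2 := congrArg (coeff (fe nu 0 0)) hrel
  have c3 := congrArg (coeff (fe 0 0 v)) hrel
  simp only [mul_sub, coeff_add, coeff_sub, coeff_mul_monomial', coeff_zero] at c1 c2 c3
  rw [if_pos (le_refl (fe 0 u 0)),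
      if_neg (by rw [fe_le]; omega : ¬ fe lam 0 w ≤ fe 0 u 0),
      if_neg (by rw [fe_le]; omega : ¬ fe nu 0 0 ≤ fe 0 u 0),
      if_neg (by rw [fe_le]; omega : ¬ fe 0 (u - z) (v - w) ≤ fe 0 u 0),
      if_neg (by rw [fe_le]; omega : ¬ fe 0 0 v ≤ fe 0 u 0),
      if_neg (by rw [fe_le]; omega : ¬ fe mu z 0 ≤ fe 0 u 0)] at c1
  rw [if_pos (le_refl (fe nu 0 0)),
      if_neg (by rw [fe_le]; omega : ¬ fe 0 u 0 ≤ fe nu 0 0),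
      if_neg (by rw [fe_le]; omega : ¬ fe lam 0 w ≤ fe nu 0 0),
      if_neg (by rw [fe_le]; omega : ¬ fe 0 (u - z) (v - w) ≤ fe nu 0 0),
      if_neg (by rw [fe_le]; omega : ¬ fe 0 0 v ≤ fe nu 0 0),
      if_neg (by rw [fe_le]; omega : ¬ fe mu z 0 ≤ fe nu 0 0)] at c2
  rw [if_pos (le_refl (fe 0 0 v)),
      if_neg (by rw [fe_le]; omega : ¬ fe 0 u 0 ≤ fe 0 0 v),
      if_neg (by rw [fe_le]; omega : ¬ fe lam 0 w ≤ fe 0 0 v),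
      if_neg (by rw [fe_le]; omega : ¬ fe nu 0 0 ≤ fe 0 0 v),
      if_neg (by rw [fe_le]; omega : ¬ fe 0 (u - z) (v - w) ≤ fe 0 0 v),
      if_neg (by rw [fe_le]; omega : ¬ fe mu z 0 ≤ fe 0 0 v)] at c3
  rw [show fe 0 u 0 - fe 0 u 0 = 0 from tsub_self _] at c1
  rw [show fe nu 0 0 - fe nu 0 0 = 0 from tsub_self _] at c2
  rw [show fe 0 0 v - fe 0 0 v = 0 from tsub_self _] at c3
  refine ⟨?_, ?_, ?_⟩
  · simpa using c1
  · simpa using c2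
  · simpa using c3

lemma mem_span_triple {R : Type*} [CommRing R] {x p q r : R}
    (h : x ∈ Ideal.span {p, q, r}) : ∃ a b c, x = a * p + b * q + c * r := by
  rw [show ({p, q, r} : Set R) = insert p (insert q {r}) from rfl,
    Ideal.mem_span_insert] at h
  obtain ⟨a, y, hy, rfl⟩ := h
  rw [Ideal.mem_span_insert] at hy
  obtain ⟨b, z', hz', rfl⟩ := hy
  obtain ⟨c, rfl⟩ := Ideal.mem_span_singleton.mp hz'
  exact ⟨a, b, c, by ring⟩

lemma sg_min (u v z w lam mu nu : ℕ)
    (hu : 0 < u) (hv : 0 < v) (hz : 0 < z) (hw : 0 < w) (hlam : 0 < lam) (hmu : 0 < mu)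
    (hnu : 0 < nu) (hzu : z < u) (hwv : w < v)
    (T : Finset (MvPolynomial (Fin 3) k))
    (hT : Ideal.span (T : Set (MvPolynomial (Fin 3) k)) = Ideal.span
        {(monomial (fe 0 u 0) 1 - monomial (fe lam 0 w) 1 : MvPolynomial (Fin 3) k),
         monomial (fe nu 0 0) 1 - monomial (fe 0 (u - z) (v - w)) 1,
         monomial (fe 0 0 v) 1 - monomial (fe mu z 0) 1}) :
    3 ≤ T.card := by
  classical
  have hc : ∀ p : MvPolynomial (Fin 3) k, coeff 0 p = constantCoeff p := fun p => by
    rw [MvPolynomial.constantCoeff_eq]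
  have hGmem : ∀ g ∈ ({(monomial (fe 0 u 0) 1 - monomial (fe lam 0 w) 1 :
        MvPolynomial (Fin 3) k),
        monomial (fe nu 0 0) 1 - monomial (fe 0 (u - z) (v - w)) 1,
        monomial (fe 0 0 v) 1 - monomial (fe mu z 0) 1} : Set (MvPolynomial (Fin 3) k)),
      g ∈ Ideal.span (T : Set (MvPolynomial (Fin 3) k)) := by
    rw [hT]; exact fun g hg => Ideal.subset_span hg
  obtain ⟨A1, hA1⟩ : ∃ a : MvPolynomial (Fin 3) k → MvPolynomial (Fin 3) k,
      ∑ i ∈ T, a i * i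
        = monomial (fe 0 u 0) 1 - monomial (fe lam 0 w) 1 := by
    obtain ⟨a, -, ha⟩ := Submodule.mem_span_finset.mp
      (hGmem (monomial (fe 0 u 0) 1 - monomial (fe lam 0 w) 1) (by simp))
    exact ⟨a, by simpa [smul_eq_mul] using ha⟩
  obtain ⟨A2, hA2⟩ : ∃ a : MvPolynomial (Fin 3) k → MvPolynomial (Fin 3) k,
      ∑ i ∈ T, a i * i
        = monomial (fe nu 0 0) 1 - monomial (fe 0 (u - z) (v - w)) 1 := by
    obtain ⟨a, -, ha⟩ := Submodule.mem_span_finset.mp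
      (hGmem (monomial (fe nu 0 0) 1 - monomial (fe 0 (u - z) (v - w)) 1) (by simp))
    exact ⟨a, by simpa [smul_eq_mul] using ha⟩
  obtain ⟨A3, hA3⟩ : ∃ a : MvPolynomial (Fin 3) k → MvPolynomial (Fin 3) k,
      ∑ i ∈ T, a i * i
        = monomial (fe 0 0 v) 1 - monomial (fe mu z 0) 1 := by
    obtain ⟨a, -, ha⟩ := Submodule.mem_span_finset.mp
      (hGmem (monomial (fe 0 0 v) 1 - monomial (fe mu z 0) 1) (by simp))
    exact ⟨a, by simpa [smul_eq_mul] using ha⟩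
  have hB : ∀ t : {x // x ∈ T}, ∃ b : Fin 3 → MvPolynomial (Fin 3) k,
      (t : MvPolynomial (Fin 3) k)
        = b 0 * (monomial (fe 0 u 0) 1 - monomial (fe lam 0 w) 1)
        + b 1 * (monomial (fe nu 0 0) 1 - monomial (fe 0 (u - z) (v - w)) 1)
        + b 2 * (monomial (fe 0 0 v) 1 - monomial (fe mu z 0) 1) := by
    intro t
    have ht : (t : MvPolynomial (Fin 3) k) ∈ Ideal.span (T : Set (MvPolynomial (Fin 3) k)) :=
      Ideal.subset_span (Finset.mem_coe.mpr t.2)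
    rw [hT] at ht
    obtain ⟨a, b, c, h⟩ := mem_span_triple ht
    exact ⟨![a, b, c], by simpa using h⟩
  choose B hB using hB
  have keygen : ∀ a : MvPolynomial (Fin 3) k → MvPolynomial (Fin 3) k,
      ∑ i ∈ T, a i * i
        = (∑ t ∈ T.attach, a ↑t * B t 0) * (monomial (fe 0 u 0) 1 - monomial (fe lam 0 w) 1)
        + (∑ t ∈ T.attach, a ↑t * B t 1) *
            (monomial (fe nu 0 0) 1 - monomial (fe 0 (u - z) (v - w)) 1)
        + (∑ t ∈ T.attach, a ↑t * B t 2) *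
            (monomial (fe 0 0 v) 1 - monomial (fe mu z 0) 1) := by
    intro a
    rw [← Finset.sum_attach T fun i => a i * i]
    rw [Finset.sum_mul, Finset.sum_mul, Finset.sum_mul, ← Finset.sum_add_distrib,
      ← Finset.sum_add_distrib]
    exact Finset.sum_congr rfl fun t _ => by rw [hB t]; ring
  have key1 := (keygen A1).symm.trans hA1
  have key2 := (keygen A2).symm.trans hA2
  have key3 := (keygen A3).symm.trans hA3
  have s1 := sg_star u v z w lam mu nu hu hv hz hw hlam hmu hnu hzu hwv
    (1 - ∑ t ∈ T.attach, A1 ↑t * B t 0) (-(∑ t ∈ T.attach, A1 ↑t * B t 1))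
    (-(∑ t ∈ T.attach, A1 ↑t * B t 2)) (by linear_combination -key1)
  have s2 := sg_star u v z w lam mu nu hu hv hz hw hlam hmu hnu hzu hwv
    (-(∑ t ∈ T.attach, A2 ↑t * B t 0)) (1 - ∑ t ∈ T.attach, A2 ↑t * B t 1)
    (-(∑ t ∈ T.attach, A2 ↑t * B t 2)) (by linear_combination -key2)
  have s3 := sg_star u v z w lam mu nu hu hv hz hw hlam hmu hnu hzu hwv
    (-(∑ t ∈ T.attach, A3 ↑t * B t 0)) (-(∑ t ∈ T.attach, A3 ↑t * B t 1))
    (1 - ∑ t ∈ T.attach, A3 ↑t * B t 2) (by linear_combination -key3)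
  -- turn into scalar matrix identities
  have hsum : ∀ (a : MvPolynomial (Fin 3) k → MvPolynomial (Fin 3) k) (l : Fin 3),
      coeff 0 (∑ t ∈ T.attach, a ↑t * B t l)
        = ∑ t ∈ T.attach, coeff 0 (a ↑t) * coeff 0 (B t l) := by
    intro a l
    simp only [hc]
    rw [map_sum]
    exact Finset.sum_congr rfl fun t _ => by rw [map_mul]
  have e11 : ∑ t ∈ T.attach, coeff 0 (A1 ↑t) * coeff 0 (B t 0) = 1 := by
    have h := s1.1
    rw [coeff_sub, MvPolynomial.coeff_zero_one, sub_eq_zero] at h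
    rw [← hsum A1 0, ← h]
  have e12 : ∑ t ∈ T.attach, coeff 0 (A1 ↑t) * coeff 0 (B t 1) = 0 := by
    have h := s1.2.1
    rw [coeff_neg, neg_eq_zero] at h
    rw [← hsum A1 1, h]
  have e13 : ∑ t ∈ T.attach, coeff 0 (A1 ↑t) * coeff 0 (B t 2) = 0 := by
    have h := s1.2.2
    rw [coeff_neg, neg_eq_zero] at h
    rw [← hsum A1 2, h]
  have e21 : ∑ t ∈ T.attach, coeff 0 (A2 ↑t) * coeff 0 (B t 0) = 0 := by
    have h := s2.1
    rw [coeff_neg, neg_eq_zero] at h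
    rw [← hsum A2 0, h]
  have e22 : ∑ t ∈ T.attach, coeff 0 (A2 ↑t) * coeff 0 (B t 1) = 1 := by
    have h := s2.2.1
    rw [coeff_sub, MvPolynomial.coeff_zero_one, sub_eq_zero] at h
    rw [← hsum A2 1, ← h]
  have e23 : ∑ t ∈ T.attach, coeff 0 (A2 ↑t) * coeff 0 (B t 2) = 0 := by
    have h := s2.2.2
    rw [coeff_neg, neg_eq_zero] at h
    rw [← hsum A2 2, h]
  have e31 : ∑ t ∈ T.attach, coeff 0 (A3 ↑t) * coeff 0 (B t 0) = 0 := by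
    have h := s3.1
    rw [coeff_neg, neg_eq_zero] at h
    rw [← hsum A3 0, h]
  have e32 : ∑ t ∈ T.attach, coeff 0 (A3 ↑t) * coeff 0 (B t 1) = 0 := by
    have h := s3.2.1
    rw [coeff_neg, neg_eq_zero] at h
    rw [← hsum A3 1, h]
  have e33 : ∑ t ∈ T.attach, coeff 0 (A3 ↑t) * coeff 0 (B t 2) = 1 := by
    have h := s3.2.2
    rw [coeff_sub, MvPolynomial.coeff_zero_one, sub_eq_zero] at h
    rw [← hsum A3 2, ← h]
  set M : Matrix (Fin 3) {x // x ∈ T} k :=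
    fun j t => coeff 0 ((![A1, A2, A3] : Fin 3 → _) j ↑t) with hM
  set Nm : Matrix {x // x ∈ T} (Fin 3) k := fun t l => coeff 0 (B t l) with hN
  have hMN : M * Nm = 1 := by
    ext j l
    fin_cases j <;> fin_cases l
    · show (M * Nm) 0 0 = (1 : Matrix (Fin 3) (Fin 3) k) 0 0
      rw [Matrix.mul_apply, Matrix.one_apply_eq, Finset.univ_eq_attach]
      simpa [hM, hN] using e11
    · show (M * Nm) 0 1 = (1 : Matrix (Fin 3) (Fin 3) k) 0 1
      rw [Matrix.mul_apply, Matrix.one_apply_ne (by decide), Finset.univ_eq_attach]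
      simpa [hM, hN] using e12
    · show (M * Nm) 0 2 = (1 : Matrix (Fin 3) (Fin 3) k) 0 2
      rw [Matrix.mul_apply, Matrix.one_apply_ne (by decide), Finset.univ_eq_attach]
      simpa [hM, hN] using e13
    · show (M * Nm) 1 0 = (1 : Matrix (Fin 3) (Fin 3) k) 1 0
      rw [Matrix.mul_apply, Matrix.one_apply_ne (by decide), Finset.univ_eq_attach]
      simpa [hM, hN] using e21
    · show (M * Nm) 1 1 = (1 : Matrix (Fin 3) (Fin 3) k) 1 1
      rw [Matrix.mul_apply, Matrix.one_apply_eq, Finset.univ_eq_attach]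
      simpa [hM, hN] using e22
    · show (M * Nm) 1 2 = (1 : Matrix (Fin 3) (Fin 3) k) 1 2
      rw [Matrix.mul_apply, Matrix.one_apply_ne (by decide), Finset.univ_eq_attach]
      simpa [hM, hN] using e23
    · show (M * Nm) 2 0 = (1 : Matrix (Fin 3) (Fin 3) k) 2 0
      rw [Matrix.mul_apply, Matrix.one_apply_ne (by decide), Finset.univ_eq_attach]
      simpa [hM, hN] using e31
    · show (M * Nm) 2 1 = (1 : Matrix (Fin 3) (Fin 3) k) 2 1
      rw [Matrix.mul_apply, Matrix.one_apply_ne (by decide), Finset.univ_eq_attach]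
      simpa [hM, hN] using e32
    · show (M * Nm) 2 2 = (1 : Matrix (Fin 3) (Fin 3) k) 2 2
      rw [Matrix.mul_apply, Matrix.one_apply_eq, Finset.univ_eq_attach]
      simpa [hM, hN] using e33
  have hrank := Matrix.rank_mul_le_right M Nm
  rw [hMN, Matrix.rank_one] at hrank
  have hle : Nm.rank ≤ Fintype.card {x // x ∈ T} := Matrix.rank_le_card_height Nm
  rw [Fintype.card_coe] at hle
  have : Fintype.card (Fin 3) ≤ T.card := le_trans hrank hle
  simpa using this

end Min


/-- for `p = 1`, `μ > 0`, `W ≠ ∅`: `H = ⟨m0,m1,n⟩` has exactly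
the two pseudo-Frobenius numbers `α_1 = (u−z−1)m_1+(v−1)n−m_0` and
`β_1 = (u−1)m_1+(v−w−1)n−m_0` (so `H` is not symmetric); the defining ideal is
`I(H) = ⟨x_0^ν − x_1^{q'+1}x_2^{v−w}, x_1^{q+1} − x_0^λ x_2^w, x_2^v − x_0^μ x_1^{q−q'}⟩`
and it is minimally generated by the three `RF(β_1)`-relations, which are (up to
sign) the binomials `x_1^u − x_0^λ x_2^w`, `x_0^ν − x_1^{u−z}x_2^{v−w}`,
`x_2^v − x_0^μ x_1^z` coming from the matrix with rows `(−1,u−1,v−w−1)`,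
`(λ−1,−1,v−1)`, `(ν−1,z−1,−1)`. -/
theorem stmt_16 (k : Type*) [Field k] (m0 d n : ℕ)
    (hm0 : 0 < m0) (hd : 0 < d) (hn : 0 < n)
    (hgcd : Nat.gcd (Nat.gcd m0 d) n = 1)
    -- minimal generation of H by m0, m1 = m0 + d, n
    (hmin0 : ¬ ∃ b c : ℕ, (m0 : ℤ) = b * ((m0 : ℤ) + d) + c * n)
    (hmin1 : ¬ ∃ a c : ℕ, ((m0 : ℤ) + d) = a * m0 + c * n)
    (hmin2 : ¬ ∃ a b : ℕ, (n : ℤ) = a * m0 + b * ((m0 : ℤ) + d))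
    (u v z w lam mu nu : ℕ)
    -- u = min { t | g_t ∉ Ap(H, m0) }, where g_t = t·m1 for p = 1
    (hu : IsLeast {t : ℕ |
      ¬ (inH3 m0 (m0 + d) n ((t : ℤ) * ((m0 : ℤ) + d)) ∧
         ¬ inH3 m0 (m0 + d) n ((t : ℤ) * ((m0 : ℤ) + d) - m0))} u)
    -- v = min { b ≥ 1 | b·n ∈ H' }
    (hv : IsLeast {b : ℕ | 1 ≤ b ∧ inSp3 m0 (m0 + d) ((b : ℤ) * n)} v)
    (hzu : z < u) (hwv : w < v) (hlam : 1 ≤ lam)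
    (hgu : (u : ℤ) * ((m0 : ℤ) + d) = lam * m0 + w * n)
    (hvn : (v : ℤ) * n = mu * m0 + (z : ℤ) * ((m0 : ℤ) + d))
    (hnu : ((u - z : ℕ) : ℤ) * ((m0 : ℤ) + d) + ((v - w : ℕ) : ℤ) * n
            = nu * m0)
    (hW : 1 ≤ z ∧ 1 ≤ w)                                 -- W ≠ ∅
    (hmupos : 0 < mu) :                                  -- μ > 0
    -- PF(H) = {α_1, β_1}, two distinct elements: H is not symmetric
    (∀ f : ℤ, isPF3 m0 (m0 + d) n f ↔
        (f = ((u - z - 1 : ℕ) : ℤ) * ((m0 : ℤ) + d) + ((v : ℤ) - 1) * n - m0 ∨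
         f = ((u - 1 : ℕ) : ℤ) * ((m0 : ℤ) + d) + ((v - w - 1 : ℕ) : ℤ) * n - m0)) ∧
    (((u - z - 1 : ℕ) : ℤ) * ((m0 : ℤ) + d) + ((v : ℤ) - 1) * n - m0 ≠
      ((u - 1 : ℕ) : ℤ) * ((m0 : ℤ) + d) + ((v - w - 1 : ℕ) : ℤ) * n - m0) ∧
    -- I(H) is the stated ideal (q = u − 1, q' = u − z − 1, q − q' = z)
    RingHom.ker (MvPolynomial.aeval (R := k)
        (fun i : Fin 3 => (Polynomial.X : Polynomial k) ^ (![m0, m0 + d, n] i))).toRingHom =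
      Ideal.span {X 0 ^ nu - X 1 ^ ((u - z - 1) + 1) * X 2 ^ (v - w),
                  X 1 ^ ((u - 1) + 1) - X 0 ^ lam * X 2 ^ w,
                  X 2 ^ v - X 0 ^ mu * X 1 ^ ((u - 1) - (u - z - 1))} ∧
    -- I(H) is generated by the three RF(β_1)-relations
    RingHom.ker (MvPolynomial.aeval (R := k)
        (fun i : Fin 3 => (Polynomial.X : Polynomial k) ^ (![m0, m0 + d, n] i))).toRingHom =
      Ideal.span {X 1 ^ u - X 0 ^ lam * X 2 ^ w,
                  X 0 ^ nu - X 1 ^ (u - z) * X 2 ^ (v - w),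
                  X 2 ^ v - X 0 ^ mu * X 1 ^ z} ∧
    -- these three binomials are (up to sign) RF(β_1)-relations of the matrix
    (∀ f ∈ ({X 1 ^ u - X 0 ^ lam * X 2 ^ w,
             X 0 ^ nu - X 1 ^ (u - z) * X 2 ^ (v - w),
             X 2 ^ v - X 0 ^ mu * X 1 ^ z} : Set (MvPolynomial (Fin 3) k)),
      ∃ i j : Fin 3,
        f = rfBinom3 k
          ![![-1, (u : ℤ) - 1, (v : ℤ) - w - 1],
            ![(lam : ℤ) - 1, -1, (v : ℤ) - 1],
            ![(nu : ℤ) - 1, (z : ℤ) - 1, -1]] i j ∨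
        f = - rfBinom3 k
          ![![-1, (u : ℤ) - 1, (v : ℤ) - w - 1],
            ![(lam : ℤ) - 1, -1, (v : ℤ) - 1],
            ![(nu : ℤ) - 1, (z : ℤ) - 1, -1]] i j) ∧
    -- minimality: no generating set with fewer than 3 elements
    (∀ T : Finset (MvPolynomial (Fin 3) k),
      Ideal.span (T : Set (MvPolynomial (Fin 3) k)) =
        RingHom.ker (MvPolynomial.aeval (R := k)
          (fun i : Fin 3 => (Polynomial.X : Polynomial k) ^ (![m0, m0 + d, n] i))).toRingHom → 3 ≤ T.card) := by
  obtain ⟨hz1, hw1⟩ := hW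
  have hm0Z : (0 : ℤ) < (m0 : ℤ) := by exact_mod_cast hm0
  have hm1Z : (0 : ℤ) < (m0 : ℤ) + d := by
    have : (0 : ℤ) < (d : ℤ) := by exact_mod_cast hd
    linarith
  have hnZ : (0 : ℤ) < (n : ℤ) := by exact_mod_cast hn
  -- minimality facts from hu, hv
  have hu' : ∀ t : ℕ, t < u →
      ¬ inH3 m0 (m0 + d) n ((t : ℤ) * ((m0 : ℤ) + d) - m0) := by
    intro t ht hin
    have hmem : t ∈ {t : ℕ |
        ¬ (inH3 m0 (m0 + d) n ((t : ℤ) * ((m0 : ℤ) + d)) ∧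
           ¬ inH3 m0 (m0 + d) n ((t : ℤ) * ((m0 : ℤ) + d) - m0))} := by
      intro hcon
      exact hcon.2 hin
    exact absurd (hu.2 hmem) (by omega)
  have hv' : ∀ s : ℕ, 1 ≤ s → s < v → ¬ inSp3 m0 (m0 + d) ((s : ℤ) * n) := by
    intro s hs1 hsv hin
    exact absurd (hv.2 ⟨hs1, hin⟩) (by omega)
  have hnuZ : (nu : ℤ) * m0
      = ((u - z : ℕ) : ℤ) * ((m0 : ℤ) + d) + ((v - w : ℕ) : ℤ) * n := hnu.symm
  have hnuZ' : (nu : ℤ) * m0 = ((u : ℤ) - z) * ((m0 : ℤ) + d) + ((v : ℤ) - w) * n := by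
    rw [hnuZ]
    push_cast [Nat.cast_sub hzu.le, Nat.cast_sub hwv.le]
    ring
  have hnueq : nu = lam + mu := by
    have h1 : (nu : ℤ) * m0 = ((lam : ℤ) + mu) * m0 := by
      have h2 : ((u : ℤ) - z) * ((m0 : ℤ) + d) + ((v : ℤ) - w) * n
          = ((lam : ℤ) + mu) * m0 := by linarith [hgu, hvn]
      linarith [hnuZ']
    have := mul_right_cancel₀ hm0Z.ne' h1
    exact_mod_cast this
  have hnupos : 0 < nu := by omega
  have hv2 : 2 ≤ v := by omega
  have hu2 : 2 ≤ u := by omega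
  -- nat relations
  have R1 : u * (m0 + d) = lam * m0 + w * n := by exact_mod_cast hgu
  have R3 : v * n = mu * m0 + z * (m0 + d) := by exact_mod_cast hvn
  have R2 : nu * m0 = (u - z) * (m0 + d) + (v - w) * n := by exact_mod_cast hnuZ
  -- injectivity of degf on normal exponents
  have hinj : ∀ e e' : Fin 3 →₀ ℕ,
      (e 1 < u ∧ e 2 < v ∧ (e 1 + z < u ∨ e 2 + w < v)) →
      (e' 1 < u ∧ e' 2 < v ∧ (e' 1 + z < u ∨ e' 2 + w < v)) →
      degf m0 (m0 + d) n e = degf m0 (m0 + d) n e' → e = e' := by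
    intro e e' hne hne' hdeg
    have hE : ((e 0 : ℕ) : ℤ) * m0 + (e 1 : ℕ) * ((m0 : ℤ) + d) + (e 2 : ℕ) * n
        = ((e' 0 : ℕ) : ℤ) * m0 + (e' 1 : ℕ) * ((m0 : ℤ) + d) + (e' 2 : ℕ) * n := by
      have : ((degf m0 (m0 + d) n e : ℕ) : ℤ) = ((degf m0 (m0 + d) n e' : ℕ) : ℤ) := by
        exact_mod_cast hdeg
      simp only [degf] at this
      push_cast at this
      linarith
    obtain ⟨h0, h1, h2⟩ := sg_inj hm0Z hm1Z hnZ hu' hv' hgu hvn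
      (e 0) (e 1) (e 2) (e' 0) (e' 1) (e' 2)
      hne.1 hne.2.1 hne.2.2 hne'.1 hne'.2.1 hne'.2.2 hE
    rw [← fe_surj e, ← fe_surj e', h0, h1, h2]
  -- kernel equality in monomial form
  have hkerM : RingHom.ker (MvPolynomial.aeval (R := k)
        (fun i : Fin 3 => (Polynomial.X : Polynomial k) ^ (![m0, m0 + d, n] i))).toRingHom =
      Ideal.span
        {(monomial (fe 0 u 0) 1 - monomial (fe lam 0 w) 1 : MvPolynomial (Fin 3) k),
         monomial (fe nu 0 0) 1 - monomial (fe 0 (u - z) (v - w)) 1,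
         monomial (fe 0 0 v) 1 - monomial (fe mu z 0) 1} := by
    apply le_antisymm
    · intro f hf
      exact sg_ker_sub m0 (m0 + d) n u v z w lam mu nu hm0 hlam hmupos hnupos
        R1 R2 R3 hzu hwv hinj f (RingHom.mem_ker.mp hf)
    · rw [Ideal.span_le]
      rintro g hg
      simp only [Set.mem_insert_iff, Set.mem_singleton_iff] at hg
      have hdeg1 : degf m0 (m0 + d) n (fe 0 u 0) = degf m0 (m0 + d) n (fe lam 0 w) := by
        simp only [degf, fe_app0, fe_app1, fe_app2]
        zify
        linarith [hgu]
      have hdeg2 : degf m0 (m0 + d) n (fe nu 0 0)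
          = degf m0 (m0 + d) n (fe 0 (u - z) (v - w)) := by
        simp only [degf, fe_app0, fe_app1, fe_app2]
        zify
        linarith [hnuZ]
      have hdeg3 : degf m0 (m0 + d) n (fe 0 0 v) = degf m0 (m0 + d) n (fe mu z 0) := by
        simp only [degf, fe_app0, fe_app1, fe_app2]
        zify
        linarith [hvn]
      rcases hg with rfl | rfl | rfl <;>
        · rw [SetLike.mem_coe, RingHom.mem_ker]
          show (MvPolynomial.aeval
            (fun i : Fin 3 => (Polynomial.X : Polynomial k) ^ (![m0, m0 + d, n] i))) _ = 0
          rw [map_sub, aeval_mono, aeval_mono]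
          first
            | rw [hdeg1, sub_self]
            | rw [hdeg2, sub_self]
            | rw [hdeg3, sub_self]
  -- translations of generators to monomial form
  have gx1 : (X 1 ^ u : MvPolynomial (Fin 3) k) = monomial (fe 0 u 0) 1 := by
    have hs : (Finsupp.single 1 u : Fin 3 →₀ ℕ) = fe 0 u 0 := by
      refine Finsupp.ext fun i => ?_
      fin_cases i <;> simp [Finsupp.single_apply]
    rw [X_pow_eq_monomial, hs]
  have gx2 : (X 0 ^ lam * X 2 ^ w : MvPolynomial (Fin 3) k) = monomial (fe lam 0 w) 1 := by
    have := X_mono (k := k) lam 0 w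
    simpa using this
  have gx3 : (X 0 ^ nu : MvPolynomial (Fin 3) k) = monomial (fe nu 0 0) 1 := by
    have hs : (Finsupp.single 0 nu : Fin 3 →₀ ℕ) = fe nu 0 0 := by
      refine Finsupp.ext fun i => ?_
      fin_cases i <;> simp [Finsupp.single_apply]
    rw [X_pow_eq_monomial, hs]
  have gx4 : (X 1 ^ (u - z) * X 2 ^ (v - w) : MvPolynomial (Fin 3) k)
      = monomial (fe 0 (u - z) (v - w)) 1 := by
    have := X_mono (k := k) 0 (u - z) (v - w)
    simpa using this
  have gx5 : (X 2 ^ v : MvPolynomial (Fin 3) k) = monomial (fe 0 0 v) 1 := by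
    have hs : (Finsupp.single 2 v : Fin 3 →₀ ℕ) = fe 0 0 v := by
      refine Finsupp.ext fun i => ?_
      fin_cases i <;> simp [Finsupp.single_apply]
    rw [X_pow_eq_monomial, hs]
  have gx6 : (X 0 ^ mu * X 1 ^ z : MvPolynomial (Fin 3) k) = monomial (fe mu z 0) 1 := by
    have := X_mono (k := k) mu z 0
    simpa using this
  have hker2 : RingHom.ker (MvPolynomial.aeval (R := k)
        (fun i : Fin 3 => (Polynomial.X : Polynomial k) ^ (![m0, m0 + d, n] i))).toRingHom =
      Ideal.span {X 1 ^ u - X 0 ^ lam * X 2 ^ w,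
                  X 0 ^ nu - X 1 ^ (u - z) * X 2 ^ (v - w),
                  X 2 ^ v - X 0 ^ mu * X 1 ^ z} := by
    rw [gx1, gx2, gx3, gx4, gx5, gx6]
    exact hkerM
  refine ⟨?_, ?_, ?_, hker2, ?_, ?_⟩
  · -- PF classification
    intro f
    rw [show ((v : ℤ) - 1) = ((v - 1 : ℕ) : ℤ) by push_cast [Nat.cast_sub (by omega : 1 ≤ v)]; ring]
    exact sg_PF hm0Z hm1Z hnZ hu' hv' hgu hvn hnuZ hzu hwv hz1 hw1 hlam hmupos f
  · -- α ≠ β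
    intro heq
    have hE : ((0 : ℕ) : ℤ) * m0 + ((u - z - 1 : ℕ) : ℤ) * ((m0 : ℤ) + d)
          + ((v - 1 : ℕ) : ℤ) * n
        = ((0 : ℕ) : ℤ) * m0 + ((u - 1 : ℕ) : ℤ) * ((m0 : ℤ) + d)
          + ((v - w - 1 : ℕ) : ℤ) * n := by
      have hc : ((v : ℤ) - 1) = ((v - 1 : ℕ) : ℤ) := by
        push_cast [Nat.cast_sub (by omega : 1 ≤ v)]; ring
      rw [hc] at heq
      push_cast
      push_cast at heq
      linarith
    obtain ⟨-, hb, -⟩ := sg_inj hm0Z hm1Z hnZ hu' hv' hgu hvn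
      0 (u - z - 1) (v - 1) 0 (u - 1) (v - w - 1)
      (by omega) (by omega) (by omega) (by omega) (by omega) (by omega) hE
    omega
  · -- first ideal form
    rw [(by omega : (u - z - 1) + 1 = u - z), (by omega : (u - 1) + 1 = u),
      (by omega : (u - 1) - (u - z - 1) = z)]
    rw [hker2]
    rw [show ({X 0 ^ nu - X 1 ^ (u - z) * X 2 ^ (v - w),
          X 1 ^ u - X 0 ^ lam * X 2 ^ w,
          X 2 ^ v - X 0 ^ mu * X 1 ^ z} : Set (MvPolynomial (Fin 3) k))
        = {X 1 ^ u - X 0 ^ lam * X 2 ^ w,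
           X 0 ^ nu - X 1 ^ (u - z) * X 2 ^ (v - w),
           X 2 ^ v - X 0 ^ mu * X 1 ^ z} from Set.insert_comm _ _ _]
  · -- RF-relations
    intro f hf
    simp only [Set.mem_insert_iff, Set.mem_singleton_iff] at hf
    set A : Fin 3 → Fin 3 → ℤ :=
      ![![-1, (u : ℤ) - 1, (v : ℤ) - w - 1],
        ![(lam : ℤ) - 1, -1, (v : ℤ) - 1],
        ![(nu : ℤ) - 1, (z : ℤ) - 1, -1]] with hAdef
    have hA00 : A 0 0 = -1 := by rw [hAdef]; rfl
    have hA01 : A 0 1 = (u : ℤ) - 1 := by rw [hAdef]; rfl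
    have hA02 : A 0 2 = (v : ℤ) - w - 1 := by rw [hAdef]; rfl
    have hA10 : A 1 0 = (lam : ℤ) - 1 := by rw [hAdef]; rfl
    have hA11 : A 1 1 = -1 := by rw [hAdef]; rfl
    have hA12 : A 1 2 = (v : ℤ) - 1 := by rw [hAdef]; rfl
    have hA20 : A 2 0 = (nu : ℤ) - 1 := by rw [hAdef]; rfl
    have hA21 : A 2 1 = (z : ℤ) - 1 := by rw [hAdef]; rfl
    have hA22 : A 2 2 = -1 := by rw [hAdef]; rfl
    have hb01 : rfBinom3 k A 0 1 = X 0 ^ lam * X 2 ^ w - X 1 ^ u := by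
      unfold rfBinom3
      rw [Fin.prod_univ_three, Fin.prod_univ_three,
        hA00, hA01, hA02, hA10, hA11, hA12]
      rw [show (((lam : ℤ) - 1) - (-1)).toNat = lam from by omega,
        show ((-1 : ℤ) - ((u : ℤ) - 1)).toNat = 0 from by omega,
        show (((v : ℤ) - 1) - ((v : ℤ) - w - 1)).toNat = w from by omega,
        show ((-1 : ℤ) - ((lam : ℤ) - 1)).toNat = 0 from by omega,
        show (((u : ℤ) - 1) - (-1)).toNat = u from by omega,
        show (((v : ℤ) - w - 1) - ((v : ℤ) - 1)).toNat = 0 from by omega]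
      simp only [pow_zero, one_mul, mul_one]
    have hb02 : rfBinom3 k A 0 2 = X 0 ^ nu - X 1 ^ (u - z) * X 2 ^ (v - w) := by
      unfold rfBinom3
      rw [Fin.prod_univ_three, Fin.prod_univ_three,
        hA00, hA01, hA02, hA20, hA21, hA22]
      rw [show (((nu : ℤ) - 1) - (-1)).toNat = nu from by omega,
        show (((z : ℤ) - 1) - ((u : ℤ) - 1)).toNat = 0 from by omega,
        show ((-1 : ℤ) - ((v : ℤ) - w - 1)).toNat = 0 from by omega,
        show ((-1 : ℤ) - ((nu : ℤ) - 1)).toNat = 0 from by omega,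
        show (((u : ℤ) - 1) - ((z : ℤ) - 1)).toNat = u - z from by omega,
        show (((v : ℤ) - w - 1) - (-1)).toNat = v - w from by omega]
      simp only [pow_zero, one_mul, mul_one]
    have hb12 : rfBinom3 k A 1 2 = X 0 ^ mu * X 1 ^ z - X 2 ^ v := by
      unfold rfBinom3
      rw [Fin.prod_univ_three, Fin.prod_univ_three,
        hA10, hA11, hA12, hA20, hA21, hA22]
      rw [show (((nu : ℤ) - 1) - ((lam : ℤ) - 1)).toNat = mu from by omega,
        show (((z : ℤ) - 1) - (-1)).toNat = z from by omega,
        show ((-1 : ℤ) - ((v : ℤ) - 1)).toNat = 0 from by omega,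
        show (((lam : ℤ) - 1) - ((nu : ℤ) - 1)).toNat = 0 from by omega,
        show ((-1 : ℤ) - ((z : ℤ) - 1)).toNat = 0 from by omega,
        show (((v : ℤ) - 1) - (-1)).toNat = v from by omega]
      simp only [pow_zero, one_mul, mul_one]
    rcases hf with rfl | rfl | rfl
    · exact ⟨0, 1, Or.inr (by rw [hb01]; ring)⟩
    · exact ⟨0, 2, Or.inl hb02.symm⟩
    · exact ⟨1, 2, Or.inr (by rw [hb12]; ring)⟩
  · -- minimality
    intro T hT
    refine sg_min u v z w lam mu nu (by omega) (by omega) hz1 hw1 hlam hmupos hnupos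
      hzu hwv T ?_
    rw [hT, hkerM]
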